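/- Let L be a language with a unary connective ¬ and binary connectives ∨ and ∧, F the set of all wffs of L, and ⟨F, 𝒱, ⊨⟩ a semantic structure satisfying (A3) and (A1). Let |~ be a relation on P(F) × F. Then |~ is a coherency preserving, definability preserving pivotal-discriminative consequence relation if and only if |~ satisfies conditions (|~0), (|~6), (|~7), (|~8), (|~9), and (|~10). -/

import Mathlib

/-- The set of models of a set of formulas `Γ`. -/
def modSet {F V : Type*} (sat : V → F → Prop) (Γ : Set F) : Set V :=
  {v | ∀ α ∈ Γ, sat v α}

/-- The set of formulas satisfied in every valuation of `S`. -/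
def thSet {F V : Type*} (sat : V → F → Prop) (S : Set V) : Set F :=
  {α | S ⊆ modSet sat {α}}

/-- `D`: the family of definable sets of valuations. -/
def defFam {F V : Type*} (sat : V → F → Prop) : Set (Set V) :=
  {S | ∃ Γ : Set F, modSet sat Γ = S}

/-- The basic consequence operator `C_⊢(Γ) = Th(Mod(Γ))`. -/
def cnsq {F V : Type*} (sat : V → F → Prop) (Γ : Set F) : Set F :=
  thSet sat (modSet sat Γ)

/-- `C_|~(Γ) = {α | Γ |~ α}`. -/
def relC {F : Type*} (rel : Set F → F → Prop) (Γ : Set F) : Set F :=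
  {α | rel Γ α}

/-- `𝐂`: the sets of valuations that do not satisfy both a formula and its negation. -/
def coFam {F V : Type*} (sat : V → F → Prop) (neg : F → F) : Set (Set V) :=
  {S | ∀ α, ¬(S ⊆ modSet sat {α} ∧ S ⊆ modSet sat {neg α})}

/-- `Γ` is consistent: for no `α` do we have both `Γ ⊢ α` and `Γ ⊢ ¬α`. -/
def isConsistent {F V : Type*} (sat : V → F → Prop) (neg : F → F) (Γ : Set F) : Prop :=
  ∀ α, ¬(modSet sat Γ ⊆ modSet sat {α} ∧ modSet sat Γ ⊆ modSet sat {neg α})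

/-- One step of the inductive construction of the sets `H_i(Γ)`:
`hStep … Γ B = {¬β : β ∈ C_⊢(B) \ C_|~(Γ) and ¬β ∉ C_⊢(B)}`. -/
def hStep {F V : Type*} (sat : V → F → Prop) (neg : F → F)
    (rel : Set F → F → Prop) (Γ B : Set F) : Set F :=
  {x | ∃ β, x = neg β ∧ β ∈ cnsq sat B ∧ β ∉ relC rel Γ ∧ neg β ∉ cnsq sat B}

/-- `hPrev … Γ n = Γ ∪ C_|~(Γ) ∪ H_1(Γ) ∪ … ∪ H_n(Γ)`. -/
def hPrev {F V : Type*} (sat : V → F → Prop) (neg : F → F)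
    (rel : Set F → F → Prop) (Γ : Set F) : ℕ → Set F
  | 0 => Γ ∪ relC rel Γ
  | n + 1 => hPrev sat neg rel Γ n ∪ hStep sat neg rel Γ (hPrev sat neg rel Γ n)

/-- `H(Γ) = ⋃_{i ≥ 1} H_i(Γ)`, where `H_{n+1}(Γ) = hStep … Γ (hPrev … Γ n)`. -/
def hSet {F V : Type*} (sat : V → F → Prop) (neg : F → F)
    (rel : Set F → F → Prop) (Γ : Set F) : Set F :=
  ⋃ n : ℕ, hStep sat neg rel Γ (hPrev sat neg rel Γ n)

/-- Assumption `(A2)`. -/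
def assumpA2 {F V : Type*} (sat : V → F → Prop) (neg : F → F) : Prop :=
  ∀ (Γ : Set F) (α : F), α ∉ cnsq sat Γ → neg α ∉ cnsq sat Γ →
    ¬(modSet sat Γ ∩ modSet sat {α} ⊆ modSet sat {neg α})

/-- Assumption `(A3)`. -/
def assumpA3 {F V : Type*} (sat : V → F → Prop) (neg : F → F)
    (disj conj : F → F → F) : Prop :=
  ∀ α β : F,
    modSet sat {disj α β} = modSet sat {α} ∪ modSet sat {β} ∧
    modSet sat {conj α β} = modSet sat {α} ∩ modSet sat {β} ∧
    modSet sat {neg (neg α)} = modSet sat {α} ∧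
    modSet sat {neg (disj α β)} = modSet sat {conj (neg α) (neg β)} ∧
    modSet sat {neg (conj α β)} = modSet sat {disj (neg α) (neg β)}

/-- Condition `(|~0)`. -/
def cond0 {F V : Type*} (sat : V → F → Prop) (rel : Set F → F → Prop) : Prop :=
  ∀ Γ Δ : Set F, cnsq sat Γ = cnsq sat Δ → relC rel Γ = relC rel Δ

/-- Condition `(|~6)`. -/
def cond6 {F V : Type*} (sat : V → F → Prop) (neg : F → F)
    (rel : Set F → F → Prop) : Prop :=
  ∀ (Γ : Set F) (α β : F),
    β ∈ cnsq sat (Γ ∪ relC rel Γ) → β ∉ relC rel Γ →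
    neg α ∈ cnsq sat (Γ ∪ relC rel Γ ∪ {neg β}) → α ∉ relC rel Γ

/-- Condition `(|~7)`. -/
def cond7 {F V : Type*} (sat : V → F → Prop) (neg : F → F) (disj : F → F → F)
    (rel : Set F → F → Prop) : Prop :=
  ∀ (Γ : Set F) (α β : F),
    α ∈ cnsq sat (Γ ∪ relC rel Γ) → α ∉ relC rel Γ →
    β ∈ cnsq sat (Γ ∪ relC rel Γ ∪ {neg α}) → β ∉ relC rel Γ →
    disj α β ∉ relC rel Γ

/-- Condition `(|~8)`. -/
def cond8 {F V : Type*} (sat : V → F → Prop) (neg : F → F)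
    (rel : Set F → F → Prop) : Prop :=
  ∀ (Γ : Set F) (α : F), α ∈ relC rel Γ → neg α ∉ cnsq sat (Γ ∪ relC rel Γ)

/-- Condition `(|~9)`. -/
def cond9 {F V : Type*} (sat : V → F → Prop) (neg : F → F)
    (rel : Set F → F → Prop) : Prop :=
  ∀ Γ Δ : Set F, relC rel Γ ∪ hSet sat neg rel Γ ⊆
    cnsq sat (Δ ∪ relC rel Δ ∪ hSet sat neg rel Δ ∪ Γ)

/-- Condition `(|~10)`. -/
def cond10 {F V : Type*} (sat : V → F → Prop) (neg : F → F)
    (rel : Set F → F → Prop) : Prop :=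
  ∀ Γ : Set F, isConsistent sat neg Γ →
    isConsistent sat neg (relC rel Γ) ∧ Γ ⊆ relC rel Γ ∧
      cnsq sat (relC rel Γ) = relC rel Γ

/-- Condition `(|~11)`. -/
def cond11 {F V : Type*} (sat : V → F → Prop) (neg : F → F)
    (rel : Set F → F → Prop) : Prop :=
  ∀ Γ : Set F, cnsq sat (Γ ∪ relC rel Γ ∪ hSet sat neg rel Γ) =
    thSet sat {v ∈ modSet sat Γ | ∀ Δ : Set F, v ∈ modSet sat Δ →
      v ∈ modSet sat (relC rel Δ ∪ hSet sat neg rel Δ)}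

/-- Condition `(|~12)`. -/
def cond12 {F V : Type*} (sat : V → F → Prop) (neg : F → F)
    (rel : Set F → F → Prop) : Prop :=
  Set.univ \ {v : V | ∀ Δ : Set F, v ∈ modSet sat Δ →
    v ∈ modSet sat (relC rel Δ ∪ hSet sat neg rel Δ)} ∈ defFam sat


section Stmt10Aux

variable {F V : Type*}

lemma mem_modSet_singleton (sat : V → F → Prop) {α : F} {v : V} :
    v ∈ modSet sat {α} ↔ sat v α := by
  simp [modSet]

lemma modSet_anti (sat : V → F → Prop) {Γ Δ : Set F} (h : Γ ⊆ Δ) :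
    modSet sat Δ ⊆ modSet sat Γ :=
  fun _ hv α hα => hv α (h hα)

lemma modSet_union (sat : V → F → Prop) (Γ Δ : Set F) :
    modSet sat (Γ ∪ Δ) = modSet sat Γ ∩ modSet sat Δ := by
  ext v; simp only [modSet, Set.mem_setOf_eq, Set.mem_union, Set.mem_inter_iff, or_imp,
    forall_and]

lemma modSet_insert (sat : V → F → Prop) (a : F) (Γ : Set F) :
    modSet sat (insert a Γ) = modSet sat {a} ∩ modSet sat Γ := by
  ext v
  simp only [modSet, Set.mem_setOf_eq, Set.mem_insert_iff, Set.mem_inter_iff, or_imp,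
    forall_and, forall_eq, Set.mem_singleton_iff]

lemma modSet_subset_of_mem (sat : V → F → Prop) {Γ : Set F} {α : F} (hα : α ∈ Γ) :
    modSet sat Γ ⊆ modSet sat {α} := by
  intro v hv
  rw [mem_modSet_singleton]
  exact hv α hα

lemma mem_cnsq (sat : V → F → Prop) {Γ : Set F} {α : F} :
    α ∈ cnsq sat Γ ↔ modSet sat Γ ⊆ modSet sat {α} := Iff.rfl

lemma mem_thSet (sat : V → F → Prop) {S : Set V} {α : F} :
    α ∈ thSet sat S ↔ S ⊆ modSet sat {α} := Iff.rfl

lemma subset_modSet_iff (sat : V → F → Prop) {S : Set V} {Γ : Set F} :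
    S ⊆ modSet sat Γ ↔ ∀ α ∈ Γ, S ⊆ modSet sat {α} := by
  constructor
  · intro h α hα v hv
    exact modSet_subset_of_mem sat hα (h hv)
  · intro h v hv α hα
    exact (mem_modSet_singleton sat).1 (h α hα hv)

lemma modSet_iUnion (sat : V → F → Prop) (Θ : ℕ → Set F) :
    modSet sat (⋃ n, Θ n) = ⋂ n, modSet sat (Θ n) := by
  ext v
  simp only [modSet, Set.mem_setOf_eq, Set.mem_iUnion, Set.mem_iInter]
  constructor
  · intro h n α hα; exact h α ⟨n, hα⟩
  · rintro h α ⟨n, hα⟩; exact h n α hα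

lemma cnsq_congr (sat : V → F → Prop) {Γ Δ : Set F}
    (h : modSet sat Γ = modSet sat Δ) : cnsq sat Γ = cnsq sat Δ := by
  unfold cnsq; rw [h]

lemma exists_finset_modSet [Finite V] (sat : V → F → Prop) (Γ : Set F) :
    ∃ t : Finset F, ↑t ⊆ Γ ∧ modSet sat ↑t = modSet sat Γ := by
  classical
  have hK : ∀ v : {v : V // v ∉ modSet sat Γ}, ∃ α, α ∈ Γ ∧ ¬ sat v.1 α := by
    rintro ⟨v, hv⟩
    by_contra h
    push_neg at h
    exact hv fun α hα => h α hα
  choose f hf1 hf2 using hK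
  refine ⟨(Set.finite_range f).toFinset, ?_, ?_⟩
  · intro x hx
    rw [Set.Finite.coe_toFinset] at hx
    obtain ⟨v, rfl⟩ := hx
    exact hf1 v
  · apply subset_antisymm
    · intro v hv
      by_contra hvn
      have hmem : f ⟨v, hvn⟩ ∈ ((Set.finite_range f).toFinset : Set F) := by
        rw [Set.Finite.coe_toFinset]; exact ⟨⟨v, hvn⟩, rfl⟩
      exact hf2 ⟨v, hvn⟩ (hv _ hmem)
    · apply modSet_anti
      intro x hx
      rw [Set.Finite.coe_toFinset] at hx
      obtain ⟨v, rfl⟩ := hx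
      exact hf1 v

end Stmt10Aux

section Stmt10Aux1b
variable {F V : Type*}

lemma modSet_cnsq (sat : V → F → Prop) (Γ : Set F) :
    modSet sat (cnsq sat Γ) = modSet sat Γ := by
  apply subset_antisymm
  · apply modSet_anti
    intro α hα
    exact modSet_subset_of_mem sat hα
  · intro v hv α hα
    exact (mem_modSet_singleton sat).1 ((mem_cnsq sat).1 hα hv)

end Stmt10Aux1b

section Stmt10Aux2

variable {F V : Type*}

lemma exists_conj_finset (sat : V → F → Prop) {neg : F → F} {disj conj : F → F → F}
    (hA3 : assumpA3 sat neg disj conj) (t : Finset F) :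
    ∀ a : F, ∃ γ : F, modSet sat {γ} = modSet sat {a} ∩ modSet sat ↑t := by
  classical
  induction t using Finset.induction_on with
  | empty =>
      intro a
      refine ⟨a, ?_⟩
      simp [modSet]
  | insert b t hb ih =>
      intro a
      obtain ⟨γ', hγ'⟩ := ih b
      refine ⟨conj a γ', ?_⟩
      rw [(hA3 a γ').2.1, hγ', Finset.coe_insert, modSet_insert]

lemma defFam_rep [Finite V] (sat : V → F → Prop) {neg : F → F} {disj conj : F → F → F}
    (hA3 : assumpA3 sat neg disj conj) {S : Set V} (hS : S ∈ defFam sat) :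
    S = Set.univ ∨ ∃ γ, modSet sat {γ} = S := by
  classical
  obtain ⟨Γ, rfl⟩ := hS
  obtain ⟨t, htsub, htmod⟩ := exists_finset_modSet sat Γ
  rcases t.eq_empty_or_nonempty with rfl | ⟨a, ha⟩
  · left
    rw [← htmod]
    ext v; simp [modSet]
  · right
    obtain ⟨γ, hγ⟩ := exists_conj_finset sat hA3 (t.erase a) a
    refine ⟨γ, ?_⟩
    rw [hγ, ← modSet_insert, ← Finset.coe_insert, Finset.insert_erase ha, htmod]

lemma hPrev_le_subset (sat : V → F → Prop) (neg : F → F) (rel : Set F → F → Prop)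
    (Γ : Set F) {n m : ℕ} (h : n ≤ m) :
    hPrev sat neg rel Γ n ⊆ hPrev sat neg rel Γ m := by
  induction m with
  | zero => simp_all
  | succ m ih =>
      rcases Nat.lt_or_ge n (m+1) with hlt | hge
      · exact (ih (Nat.lt_succ_iff.1 hlt)).trans Set.subset_union_left
      · have : n = m + 1 := le_antisymm h hge
        subst this; rfl

lemma modSet_hPrev_anti (sat : V → F → Prop) (neg : F → F) (rel : Set F → F → Prop)
    (Γ : Set F) {n m : ℕ} (h : n ≤ m) :
    modSet sat (hPrev sat neg rel Γ m) ⊆ modSet sat (hPrev sat neg rel Γ n) :=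
  modSet_anti sat (hPrev_le_subset sat neg rel Γ h)

lemma exists_stab [Finite V] (sat : V → F → Prop) (neg : F → F) (rel : Set F → F → Prop)
    (Γ : Set F) :
    ∃ n₀ : ℕ, ∀ m, n₀ ≤ m →
      modSet sat (hPrev sat neg rel Γ m) = modSet sat (hPrev sat neg rel Γ n₀) := by
  set g : ℕ → ℕ := fun n => (modSet sat (hPrev sat neg rel Γ n)).ncard with hg
  obtain ⟨n₀, hn₀⟩ : sInf (Set.range g) ∈ Set.range g := Nat.sInf_mem (Set.range_nonempty g)
  refine ⟨n₀, fun m hm => ?_⟩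
  refine Set.eq_of_subset_of_ncard_le (modSet_hPrev_anti sat neg rel Γ hm) ?_ (Set.toFinite _)
  rw [show (modSet sat (hPrev sat neg rel Γ n₀)).ncard = g n₀ from rfl, hn₀]
  exact Nat.sInf_le ⟨m, rfl⟩

lemma union_eq_iUnion_hPrev (sat : V → F → Prop) (neg : F → F) (rel : Set F → F → Prop)
    (Γ : Set F) :
    Γ ∪ relC rel Γ ∪ hSet sat neg rel Γ = ⋃ n, hPrev sat neg rel Γ n := by
  apply subset_antisymm
  · apply Set.union_subset
    · exact (Set.subset_iUnion (fun n => hPrev sat neg rel Γ n) 0 :)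
    · apply Set.iUnion_subset
      intro n
      exact (Set.subset_union_right.trans
        (Set.subset_iUnion (fun n => hPrev sat neg rel Γ n) (n+1)) :)
  · apply Set.iUnion_subset
    intro n
    induction n with
    | zero => exact Set.subset_union_left
    | succ n ih =>
        apply Set.union_subset ih
        exact (Set.subset_iUnion (fun n => hStep sat neg rel Γ (hPrev sat neg rel Γ n)) n).trans
          Set.subset_union_right

lemma modSet_tri_eq [Finite V] (sat : V → F → Prop) (neg : F → F) (rel : Set F → F → Prop)
    (Γ : Set F) {n₀ : ℕ}
    (hstab : ∀ m, n₀ ≤ m →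
      modSet sat (hPrev sat neg rel Γ m) = modSet sat (hPrev sat neg rel Γ n₀)) :
    modSet sat (Γ ∪ relC rel Γ ∪ hSet sat neg rel Γ) = modSet sat (hPrev sat neg rel Γ n₀) := by
  rw [union_eq_iUnion_hPrev, modSet_iUnion]
  apply subset_antisymm
  · exact Set.iInter_subset _ n₀
  · apply Set.subset_iInter
    intro n
    rcases le_total n n₀ with h | h
    · exact modSet_hPrev_anti sat neg rel Γ h
    · rw [hstab n h]

end Stmt10Aux2

theorem stmt10_forward {F V : Type*} (neg : F → F) (disj conj : F → F → F)
    (sat : V → F → Prop) (hA3 : assumpA3 sat neg disj conj) (hA1 : Finite V)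
    (rel : Set F → F → Prop) (μ : Set V → Set V)
    (h1 : ∀ A ∈ defFam sat, μ A ⊆ A)
    (h2 : ∀ A ∈ defFam sat, ∀ B ∈ defFam sat, μ B ∩ A ⊆ μ A)
    (h3 : ∀ A ∈ defFam sat, A ∈ coFam sat neg → μ A ∈ coFam sat neg)
    (h4 : ∀ A ∈ defFam sat, μ A ∈ defFam sat)
    (h5 : ∀ (Γ : Set F) (α : F), rel Γ α ↔
      (μ (modSet sat Γ) ⊆ modSet sat {α} ∧ ¬ μ (modSet sat Γ) ⊆ modSet sat {neg α})) :
    cond0 sat rel ∧ cond6 sat neg rel ∧ cond7 sat neg disj rel ∧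
      cond8 sat neg rel ∧ cond9 sat neg rel ∧ cond10 sat neg rel := by
  classical
  haveI := hA1
  have hdef : ∀ Γ : Set F, modSet sat Γ ∈ defFam sat := fun Γ => ⟨Γ, rfl⟩
  have hrel : ∀ (Γ : Set F) (α : F), α ∈ relC rel Γ ↔
      (μ (modSet sat Γ) ⊆ modSet sat {α} ∧ ¬ μ (modSet sat Γ) ⊆ modSet sat {neg α}) :=
    fun Γ α => h5 Γ α
  have hnegdisj : ∀ a b : F,
      modSet sat {neg (disj a b)} = modSet sat {neg a} ∩ modSet sat {neg b} :=
    fun a b => ((hA3 a b).2.2.2.1).trans ((hA3 (neg a) (neg b)).2.1)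
  have hXsub : ∀ Γ : Set F, μ (modSet sat Γ) ⊆ modSet sat Γ := fun Γ => h1 _ (hdef Γ)
  have hXrelC : ∀ Γ : Set F, μ (modSet sat Γ) ⊆ modSet sat (relC rel Γ) := by
    intro Γ
    rw [subset_modSet_iff]
    intro α hα
    exact ((hrel Γ α).1 hα).1
  have hXhPrev : ∀ (Γ : Set F) (n : ℕ),
      μ (modSet sat Γ) ⊆ modSet sat (hPrev sat neg rel Γ n) := by
    intro Γ n
    induction n with
    | zero =>
        show μ (modSet sat Γ) ⊆ modSet sat (Γ ∪ relC rel Γ)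
        rw [modSet_union]
        exact Set.subset_inter (hXsub Γ) (hXrelC Γ)
    | succ n ih =>
        show μ _ ⊆ modSet sat
          (hPrev sat neg rel Γ n ∪ hStep sat neg rel Γ (hPrev sat neg rel Γ n))
        rw [modSet_union]
        refine Set.subset_inter ih ?_
        rw [subset_modSet_iff]
        rintro x ⟨β, rfl, hβ1, hβ2, _⟩
        have hXβ : μ (modSet sat Γ) ⊆ modSet sat {β} := ih.trans hβ1
        by_contra hcon
        exact hβ2 ((hrel Γ β).2 ⟨hXβ, hcon⟩)
  -- Claim A
  have claimA : ∀ Γ : Set F,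
      modSet sat (Γ ∪ relC rel Γ ∪ hSet sat neg rel Γ) = μ (modSet sat Γ) := by
    intro Γ
    obtain ⟨n₀, hstab⟩ := exists_stab sat neg rel Γ
    have hYeq := modSet_tri_eq sat neg rel Γ hstab
    rw [hYeq]
    set X := μ (modSet sat Γ) with hX
    set Y := modSet sat (hPrev sat neg rel Γ n₀) with hYdef
    have hXY : X ⊆ Y := hXhPrev Γ n₀
    have hYΓ : Y ⊆ modSet sat Γ := by
      apply modSet_anti
      exact (Set.subset_union_left).trans (hPrev_le_subset sat neg rel Γ (Nat.zero_le n₀))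
    have hYrelC : Y ⊆ modSet sat (relC rel Γ) := by
      apply modSet_anti
      exact (Set.subset_union_right).trans (hPrev_le_subset sat neg rel Γ (Nat.zero_le n₀))
    have hstar : ∀ β : F, Y ⊆ modSet sat {β} → β ∉ relC rel Γ →
        Y ⊆ modSet sat {neg β} := by
      intro β hYβ hβrel
      by_contra hcon
      have hmem : neg β ∈ hPrev sat neg rel Γ (n₀ + 1) :=
        Or.inr ⟨β, rfl, hYβ, hβrel, hcon⟩
      have := (hstab (n₀+1) (Nat.le_succ n₀)).symm.subset.trans
        (modSet_subset_of_mem sat hmem)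
      exact hcon this
    apply subset_antisymm _ hXY
    rcases defFam_rep sat hA3 (h4 _ (hdef Γ)) with huniv | ⟨γ, hγ⟩
    · rw [hX, huniv]; exact Set.subset_univ Y
    · by_cases hbad : X ⊆ modSet sat {neg γ}
      · -- α₀ witnessing inconsistency of Γ
        have hΓnotco : modSet sat Γ ∉ coFam sat neg := by
          intro hco
          exact (h3 _ (hdef Γ) hco) γ ⟨hγ.ge, hbad⟩
        obtain ⟨α₀, hα₀1, hα₀2⟩ : ∃ α₀, modSet sat Γ ⊆ modSet sat {α₀} ∧
            modSet sat Γ ⊆ modSet sat {neg α₀} := by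
          by_contra hcon
          push_neg at hcon
          exact hΓnotco fun α h => (hcon α h.1) h.2
        have hb1 : Y ⊆ modSet sat {disj γ α₀} := by
          rw [(hA3 γ α₀).1]
          exact (hYΓ.trans hα₀1).trans Set.subset_union_right
        have hb1r : disj γ α₀ ∉ relC rel Γ := by
          intro h
          refine ((hrel Γ _).1 h).2 ?_
          rw [hnegdisj]
          exact Set.subset_inter hbad (hXsub Γ |>.trans hα₀2)
        have hYnγ : Y ⊆ modSet sat {neg γ} := by
          have := hstar _ hb1 hb1r
          rw [hnegdisj] at this
          exact this.trans Set.inter_subset_left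
        have hb2 : Y ⊆ modSet sat {disj (neg γ) α₀} := by
          rw [(hA3 (neg γ) α₀).1]
          exact hYnγ.trans Set.subset_union_left
        have hb2r : disj (neg γ) α₀ ∉ relC rel Γ := by
          intro h
          refine ((hrel Γ _).1 h).2 ?_
          rw [hnegdisj, (hA3 γ γ).2.2.1]
          exact Set.subset_inter hγ.ge ((hXsub Γ).trans hα₀2)
        have := hstar _ hb2 hb2r
        rw [hnegdisj, (hA3 γ γ).2.2.1] at this
        exact (this.trans Set.inter_subset_left).trans hγ.le
      · have hγrel : γ ∈ relC rel Γ := (hrel Γ γ).2 ⟨hγ.ge, hbad⟩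
        exact (hYrelC.trans (modSet_subset_of_mem sat hγrel)).trans hγ.le
  refine ⟨?_, ?_, ?_, ?_, ?_, ?_⟩
  · -- cond0
    intro Γ Δ h
    have hM : modSet sat Γ = modSet sat Δ := by
      rw [← modSet_cnsq sat Γ, h, modSet_cnsq]
    ext α
    rw [hrel, hrel, hM]
  · -- cond6
    intro Γ α β hβc hβr hnα
    have hXZ : μ (modSet sat Γ) ⊆ modSet sat (Γ ∪ relC rel Γ) := hXhPrev Γ 0
    have hXβ : μ (modSet sat Γ) ⊆ modSet sat {β} := hXZ.trans hβc
    have hXnβ : μ (modSet sat Γ) ⊆ modSet sat {neg β} := by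
      by_contra hcon
      exact hβr ((hrel Γ β).2 ⟨hXβ, hcon⟩)
    have hXnα : μ (modSet sat Γ) ⊆ modSet sat {neg α} := by
      have h' : μ (modSet sat Γ) ⊆ modSet sat (Γ ∪ relC rel Γ ∪ {neg β}) := by
        rw [modSet_union]
        exact Set.subset_inter hXZ hXnβ
      exact h'.trans hnα
    intro h
    exact ((hrel Γ α).1 h).2 hXnα
  · -- cond7
    intro Γ α β hαc hαr hβc hβr
    have hXZ : μ (modSet sat Γ) ⊆ modSet sat (Γ ∪ relC rel Γ) := hXhPrev Γ 0
    have hXα : μ (modSet sat Γ) ⊆ modSet sat {α} := hXZ.trans hαc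
    have hXnα : μ (modSet sat Γ) ⊆ modSet sat {neg α} := by
      by_contra hcon
      exact hαr ((hrel Γ α).2 ⟨hXα, hcon⟩)
    have hXβ : μ (modSet sat Γ) ⊆ modSet sat {β} := by
      have h' : μ (modSet sat Γ) ⊆ modSet sat (Γ ∪ relC rel Γ ∪ {neg α}) := by
        rw [modSet_union]
        exact Set.subset_inter hXZ hXnα
      exact h'.trans hβc
    have hXnβ : μ (modSet sat Γ) ⊆ modSet sat {neg β} := by
      by_contra hcon
      exact hβr ((hrel Γ β).2 ⟨hXβ, hcon⟩)
    intro h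
    refine ((hrel Γ _).1 h).2 ?_
    rw [hnegdisj]
    exact Set.subset_inter hXnα hXnβ
  · -- cond8
    intro Γ α hα hc
    exact ((hrel Γ α).1 hα).2 ((hXhPrev Γ 0).trans hc)
  · -- cond9
    intro Γ Δ φ hφ
    rw [mem_cnsq]
    have hWX : modSet sat (Δ ∪ relC rel Δ ∪ hSet sat neg rel Δ ∪ Γ) ⊆
        μ (modSet sat Γ) := by
      rw [modSet_union, claimA Δ]
      exact h2 _ (hdef Γ) _ (hdef Δ)
    refine hWX.trans ?_
    rw [← claimA Γ]
    apply modSet_subset_of_mem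
    rcases hφ with h | h
    · exact Or.inl (Or.inr h)
    · exact Or.inr h
  · -- cond10
    intro Γ hcons
    have hco : modSet sat Γ ∈ coFam sat neg := hcons
    have hXco := h3 _ (hdef Γ) hco
    have hsub1 : μ (modSet sat Γ) ⊆ modSet sat (relC rel Γ) := hXrelC Γ
    have hsub2 : modSet sat (relC rel Γ) ⊆ μ (modSet sat Γ) := by
      rcases defFam_rep sat hA3 (h4 _ (hdef Γ)) with huniv | ⟨γ, hγ⟩
      · rw [huniv]; exact Set.subset_univ _
      · have hγrel : γ ∈ relC rel Γ :=
          (hrel Γ γ).2 ⟨hγ.ge, fun hc => hXco γ ⟨hγ.ge, hc⟩⟩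
        exact (modSet_subset_of_mem sat hγrel).trans hγ.le
    have hMeq : modSet sat (relC rel Γ) = μ (modSet sat Γ) :=
      subset_antisymm hsub2 hsub1
    refine ⟨?_, ?_, ?_⟩
    · intro α ⟨ha, hb⟩
      exact hXco α ⟨hsub1.trans ha, hsub1.trans hb⟩
    · intro α hα
      exact (hrel Γ α).2 ⟨(hXsub Γ).trans (modSet_subset_of_mem sat hα),
        fun hcon => hXco α ⟨(hXsub Γ).trans (modSet_subset_of_mem sat hα), hcon⟩⟩
    · ext α
      rw [mem_cnsq, hMeq]
      constructor
      · intro h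
        exact (hrel Γ α).2 ⟨h, fun hc => hXco α ⟨h, hc⟩⟩
      · intro h
        exact ((hrel Γ α).1 h).1

section Stmt10Bk

variable {F V : Type*}

lemma modSet_empty (sat : V → F → Prop) : modSet sat (∅ : Set F) = Set.univ := by
  ext v; simp [modSet]

lemma sel_lemma (sat : V → F → Prop) (neg : F → F) (disj conj : F → F → F)
    (hA3 : assumpA3 sat neg disj conj) (rel : Set F → F → Prop)
    (hc7 : cond7 sat neg disj rel) (Γ : Set F) (n : ℕ) :
    ∀ t : Finset F, (↑t : Set F) ⊆ hStep sat neg rel Γ (hPrev sat neg rel Γ n) →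
    ∀ C : F, C ∈ cnsq sat (Γ ∪ relC rel Γ) → C ∉ relC rel Γ →
      modSet sat (Γ ∪ relC rel Γ) ∩ modSet sat {neg C} ⊆
        modSet sat (hPrev sat neg rel Γ n) →
      ∃ C', C' ∈ cnsq sat (Γ ∪ relC rel Γ) ∧ C' ∉ relC rel Γ ∧
        modSet sat (Γ ∪ relC rel Γ) ∩ modSet sat {neg C'} =
          modSet sat (Γ ∪ relC rel Γ) ∩ modSet sat {neg C} ∩ modSet sat (↑t : Set F) := by
  classical
  have hnegdisj : ∀ a b : F,
      modSet sat {neg (disj a b)} = modSet sat {neg a} ∩ modSet sat {neg b} :=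
    fun a b => ((hA3 a b).2.2.2.1).trans ((hA3 (neg a) (neg b)).2.1)
  intro t
  induction t using Finset.induction_on with
  | empty =>
      intro _ C hC1 hC2 _
      refine ⟨C, hC1, hC2, ?_⟩
      rw [Finset.coe_empty, modSet_empty, Set.inter_univ]
  | insert x s hx ih =>
      intro ht C hC1 hC2 hCsub
      have hxmem : x ∈ hStep sat neg rel Γ (hPrev sat neg rel Γ n) := ht (by simp)
      obtain ⟨β, rfl, hβ1, hβ2, _⟩ := hxmem
      have hsub' : (↑s : Set F) ⊆ hStep sat neg rel Γ (hPrev sat neg rel Γ n) := by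
        intro y hy
        exact ht (by simp [hy])
      have hC₁1 : disj C β ∈ cnsq sat (Γ ∪ relC rel Γ) := by
        rw [mem_cnsq, (hA3 C β).1]
        exact ((mem_cnsq sat).1 hC1).trans Set.subset_union_left
      have hβin : β ∈ cnsq sat (Γ ∪ relC rel Γ ∪ {neg C}) := by
        rw [mem_cnsq, modSet_union]
        exact hCsub.trans ((mem_cnsq sat).1 hβ1)
      have hC₁2 : disj C β ∉ relC rel Γ := hc7 Γ C β hC1 hC2 hβin hβ2
      have hsub₁ : modSet sat (Γ ∪ relC rel Γ) ∩ modSet sat {neg (disj C β)} ⊆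
          modSet sat (hPrev sat neg rel Γ n) := by
        rw [hnegdisj]
        refine Set.Subset.trans ?_ hCsub
        intro v hv
        exact ⟨hv.1, hv.2.1⟩
      obtain ⟨C', h1', h2', h3'⟩ := ih hsub' (disj C β) hC₁1 hC₁2 hsub₁
      refine ⟨C', h1', h2', ?_⟩
      rw [h3', hnegdisj, Finset.coe_insert, modSet_insert]
      ext v
      simp only [Set.mem_inter_iff]
      tauto

lemma inv_lemma [Finite V] (sat : V → F → Prop) (neg : F → F) (disj conj : F → F → F)
    (hA3 : assumpA3 sat neg disj conj) (rel : Set F → F → Prop)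
    (hc7 : cond7 sat neg disj rel) (Γ : Set F) :
    ∀ n : ℕ, modSet sat (hPrev sat neg rel Γ n) = modSet sat (Γ ∪ relC rel Γ) ∨
      ∃ B, B ∈ cnsq sat (Γ ∪ relC rel Γ) ∧ B ∉ relC rel Γ ∧
        modSet sat (hPrev sat neg rel Γ n) =
          modSet sat (Γ ∪ relC rel Γ) ∩ modSet sat {neg B} := by
  classical
  intro n
  induction n with
  | zero => left; rfl
  | succ n ih =>
      obtain ⟨t, htsub, htmod⟩ :=
        exists_finset_modSet sat (hStep sat neg rel Γ (hPrev sat neg rel Γ n))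
      have hsucc : modSet sat (hPrev sat neg rel Γ (n+1)) =
          modSet sat (hPrev sat neg rel Γ n) ∩ modSet sat (↑t : Set F) := by
        show modSet sat (hPrev sat neg rel Γ n ∪
          hStep sat neg rel Γ (hPrev sat neg rel Γ n)) = _
        rw [modSet_union, htmod]
      rcases ih with h0 | ⟨B, hB1, hB2, hB3⟩
      · rcases t.eq_empty_or_nonempty with rfl | ⟨x, hx⟩
        · left
          rw [hsucc, h0, Finset.coe_empty, modSet_empty, Set.inter_univ]
        · have hxmem : x ∈ hStep sat neg rel Γ (hPrev sat neg rel Γ n) := htsub hx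
          obtain ⟨β₀, hxeq, hβ₀1, hβ₀2, _⟩ := hxmem
          have hC1 : β₀ ∈ cnsq sat (Γ ∪ relC rel Γ) := by
            rw [mem_cnsq, ← h0]
            exact hβ₀1
          have hCsub : modSet sat (Γ ∪ relC rel Γ) ∩ modSet sat {neg β₀} ⊆
              modSet sat (hPrev sat neg rel Γ n) := by
            rw [h0]
            exact Set.inter_subset_left
          have hesub : (↑(t.erase x) : Set F) ⊆
              hStep sat neg rel Γ (hPrev sat neg rel Γ n) := by
            intro y hy
            exact htsub (Finset.mem_coe.2 (Finset.mem_of_mem_erase (Finset.mem_coe.1 hy)))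
          obtain ⟨C', h1', h2', h3'⟩ :=
            sel_lemma sat neg disj conj hA3 rel hc7 Γ n (t.erase x) hesub β₀ hC1 hβ₀2 hCsub
          right
          refine ⟨C', h1', h2', ?_⟩
          rw [hsucc, h0, h3']
          have hts : (↑t : Set F) = insert x ↑(t.erase x) := by
            rw [← Finset.coe_insert, Finset.insert_erase hx]
          rw [hts, modSet_insert, hxeq]
          ext v
          simp only [Set.mem_inter_iff]
          tauto
      · have hCsub : modSet sat (Γ ∪ relC rel Γ) ∩ modSet sat {neg B} ⊆
            modSet sat (hPrev sat neg rel Γ n) := hB3.ge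
        obtain ⟨C', h1', h2', h3'⟩ :=
          sel_lemma sat neg disj conj hA3 rel hc7 Γ n t htsub B hB1 hB2 hCsub
        right
        refine ⟨C', h1', h2', ?_⟩
        rw [hsucc, hB3, h3']

lemma relC_iff_bk [Finite V] (sat : V → F → Prop) (neg : F → F) (disj conj : F → F → F)
    (hA3 : assumpA3 sat neg disj conj) (rel : Set F → F → Prop)
    (hc6 : cond6 sat neg rel) (hc7 : cond7 sat neg disj rel) (hc8 : cond8 sat neg rel)
    (Γ : Set F) (α : F) :
    α ∈ relC rel Γ ↔
      (modSet sat (Γ ∪ relC rel Γ ∪ hSet sat neg rel Γ) ⊆ modSet sat {α} ∧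
       ¬ modSet sat (Γ ∪ relC rel Γ ∪ hSet sat neg rel Γ) ⊆ modSet sat {neg α}) := by
  obtain ⟨n₀, hstab⟩ := exists_stab sat neg rel Γ
  have hYeq := modSet_tri_eq sat neg rel Γ hstab
  constructor
  · intro hα
    refine ⟨modSet_subset_of_mem sat (Or.inl (Or.inr hα)), ?_⟩
    intro hcon
    rw [hYeq] at hcon
    rcases inv_lemma sat neg disj conj hA3 rel hc7 Γ n₀ with h0 | ⟨B, hB1, hB2, hB3⟩
    · refine hc8 Γ α hα ?_
      rw [mem_cnsq, ← h0]
      exact hcon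
    · refine absurd hα (hc6 Γ α B hB1 hB2 ?_)
      rw [mem_cnsq, modSet_union, ← hB3]
      exact hcon
  · rintro ⟨hsub, hnot⟩
    by_contra hα
    have hmem : neg α ∈ hStep sat neg rel Γ (hPrev sat neg rel Γ n₀) := by
      refine ⟨α, rfl, ?_, hα, ?_⟩
      · rw [mem_cnsq, ← hYeq]
        exact hsub
      · intro hc
        apply hnot
        rw [mem_cnsq, ← hYeq] at hc
        exact hc
    exact hnot (modSet_subset_of_mem sat (Or.inr (Set.mem_iUnion.2 ⟨n₀, hmem⟩)))

lemma tri_eq_of_nice (sat : V → F → Prop) (neg : F → F) (rel : Set F → F → Prop)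
    (Γ : Set F) (hsub : Γ ⊆ relC rel Γ)
    (hfix : cnsq sat (relC rel Γ) = relC rel Γ) :
    modSet sat (Γ ∪ relC rel Γ ∪ hSet sat neg rel Γ) = modSet sat (relC rel Γ) := by
  have hM0 : modSet sat (Γ ∪ relC rel Γ) = modSet sat (relC rel Γ) := by
    rw [modSet_union]
    exact Set.inter_eq_self_of_subset_right (modSet_anti sat hsub)
  have hstep0 : hStep sat neg rel Γ (Γ ∪ relC rel Γ) = ∅ := by
    ext x
    simp only [hStep, Set.mem_setOf_eq, Set.mem_empty_iff_false, iff_false, not_exists]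
    rintro β ⟨_, hβ1, hβ2, _⟩
    apply hβ2
    rw [← hfix, mem_cnsq, ← hM0]
    exact hβ1
  have hPrev_eq : ∀ n, hPrev sat neg rel Γ n = Γ ∪ relC rel Γ := by
    intro n
    induction n with
    | zero => rfl
    | succ n ih =>
        show hPrev sat neg rel Γ n ∪ hStep sat neg rel Γ (hPrev sat neg rel Γ n) = _
        rw [ih, hstep0, Set.union_empty]
  have hHempty : hSet sat neg rel Γ = ∅ := by
    unfold hSet
    apply Set.eq_empty_of_subset_empty
    apply Set.iUnion_subset
    intro n
    rw [hPrev_eq n, hstep0]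
  rw [hHempty, Set.union_empty, hM0]

lemma tri_congr (sat : V → F → Prop) (neg : F → F) (rel : Set F → F → Prop)
    (hc0 : cond0 sat rel) {Γ Δ : Set F} (h : modSet sat Γ = modSet sat Δ) :
    relC rel Γ = relC rel Δ ∧
    modSet sat (Γ ∪ relC rel Γ ∪ hSet sat neg rel Γ) =
      modSet sat (Δ ∪ relC rel Δ ∪ hSet sat neg rel Δ) := by
  have hrc : relC rel Γ = relC rel Δ := hc0 Γ Δ (cnsq_congr sat h)
  have hmain : ∀ n,
      modSet sat (hPrev sat neg rel Γ n) = modSet sat (hPrev sat neg rel Δ n) ∧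
      hStep sat neg rel Γ (hPrev sat neg rel Γ n) =
        hStep sat neg rel Δ (hPrev sat neg rel Δ n) := by
    intro n
    induction n with
    | zero =>
        have h0 : modSet sat (hPrev sat neg rel Γ 0) =
            modSet sat (hPrev sat neg rel Δ 0) := by
          show modSet sat (Γ ∪ relC rel Γ) = modSet sat (Δ ∪ relC rel Δ)
          rw [modSet_union, modSet_union, h, hrc]
        refine ⟨h0, ?_⟩
        unfold hStep
        rw [hrc, cnsq_congr sat h0]
    | succ n ih =>
        have h1 : modSet sat (hPrev sat neg rel Γ (n+1)) =
            modSet sat (hPrev sat neg rel Δ (n+1)) := by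
          show modSet sat (hPrev sat neg rel Γ n ∪
              hStep sat neg rel Γ (hPrev sat neg rel Γ n)) =
            modSet sat (hPrev sat neg rel Δ n ∪
              hStep sat neg rel Δ (hPrev sat neg rel Δ n))
          rw [modSet_union, modSet_union, ih.1, ih.2]
        refine ⟨h1, ?_⟩
        unfold hStep
        rw [hrc, cnsq_congr sat h1]
  refine ⟨hrc, ?_⟩
  have hH : hSet sat neg rel Γ = hSet sat neg rel Δ := by
    unfold hSet
    exact Set.iUnion_congr fun n => (hmain n).2
  simp only [modSet_union]
  rw [h, hrc, hH]

end Stmt10Bk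

theorem stmt10_backward {F V : Type*} (neg : F → F) (disj conj : F → F → F)
    (sat : V → F → Prop) (hA3 : assumpA3 sat neg disj conj) (hA1 : Finite V)
    (rel : Set F → F → Prop)
    (hc0 : cond0 sat rel) (hc6 : cond6 sat neg rel) (hc7 : cond7 sat neg disj rel)
    (hc8 : cond8 sat neg rel) (hc9 : cond9 sat neg rel) (hc10 : cond10 sat neg rel) :
    ∃ μ : Set V → Set V,
        (∀ A ∈ defFam sat, μ A ⊆ A) ∧
        (∀ A ∈ defFam sat, ∀ B ∈ defFam sat, μ B ∩ A ⊆ μ A) ∧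
        (∀ A ∈ defFam sat, A ∈ coFam sat neg → μ A ∈ coFam sat neg) ∧
        (∀ A ∈ defFam sat, μ A ∈ defFam sat) ∧
        (∀ (Γ : Set F) (α : F), rel Γ α ↔
          (μ (modSet sat Γ) ⊆ modSet sat {α} ∧
            ¬ μ (modSet sat Γ) ⊆ modSet sat {neg α})) := by
  classical
  haveI := hA1
  have hex : ∀ A : Set V, A ∈ defFam sat → ∃ Γ : Set F, modSet sat Γ = A := fun _ h => h
  refine ⟨fun A => if h : A ∈ defFam sat then
      modSet sat ((hex A h).choose ∪ relC rel (hex A h).choose ∪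
        hSet sat neg rel (hex A h).choose) else ∅, ?_, ?_, ?_, ?_, ?_⟩
  · -- μ A ⊆ A
    intro A hA
    beta_reduce
    rw [dif_pos hA]
    have h1 : modSet sat ((hex A hA).choose ∪ relC rel (hex A hA).choose ∪
        hSet sat neg rel (hex A hA).choose) ⊆ modSet sat (hex A hA).choose :=
      modSet_anti sat (Set.subset_union_left.trans Set.subset_union_left)
    rw [(hex A hA).choose_spec] at h1
    exact h1
  · -- strong coherence
    intro A hA B hB
    beta_reduce
    rw [dif_pos hA, dif_pos hB]
    set ΓA := (hex A hA).choose with hΓA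
    set ΓB := (hex B hB).choose with hΓB
    have h9 := hc9 ΓA ΓB
    have hW : modSet sat (ΓB ∪ relC rel ΓB ∪ hSet sat neg rel ΓB ∪ ΓA) =
        modSet sat (ΓB ∪ relC rel ΓB ∪ hSet sat neg rel ΓB) ∩ A := by
      rw [modSet_union, (hex A hA).choose_spec]
    rw [subset_modSet_iff]
    intro φ hφ
    rcases hφ with hφ | hφ
    rcases hφ with hφ | hφ
    · -- φ ∈ ΓA
      refine Set.inter_subset_right.trans ?_
      rw [← (hex A hA).choose_spec]
      exact modSet_subset_of_mem sat hφ
    · -- φ ∈ relC ΓA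
      have := h9 (Or.inl hφ)
      rw [mem_cnsq, hW] at this
      exact this
    · -- φ ∈ hSet ΓA
      have := h9 (Or.inr hφ)
      rw [mem_cnsq, hW] at this
      exact this
  · -- coherency preservation
    intro A hA hAco
    beta_reduce
    rw [dif_pos hA]
    have hcons : isConsistent sat neg (hex A hA).choose := by
      intro α
      rw [(hex A hA).choose_spec]
      exact hAco α
    obtain ⟨hconsC, hsubC, hfixC⟩ := hc10 _ hcons
    rw [tri_eq_of_nice sat neg rel _ hsubC hfixC]
    intro α
    exact hconsC α
  · -- definability preservation
    intro A hA
    beta_reduce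
    rw [dif_pos hA]
    exact ⟨_, rfl⟩
  · -- the representation property
    intro Γ α
    have hΓdef : modSet sat Γ ∈ defFam sat := ⟨Γ, rfl⟩
    beta_reduce
    rw [dif_pos hΓdef]
    obtain ⟨hrc, htr⟩ := tri_congr sat neg rel hc0
      ((hex _ hΓdef).choose_spec : modSet sat (hex _ hΓdef).choose = modSet sat Γ)
    rw [htr]
    exact relC_iff_bk sat neg disj conj hA3 rel hc6 hc7 hc8 Γ α

/-- Under `(A3)` and `(A1)`, `|~` is a coherency preserving,
definability preserving pivotal-discriminative consequence relation iff it satisfies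
`(|~0)`, `(|~6)`, `(|~7)`, `(|~8)`, `(|~9)`, and `(|~10)`. -/
theorem stmt10 {F V : Type*} (neg : F → F) (disj conj : F → F → F)
    (sat : V → F → Prop)
    (hA3 : assumpA3 sat neg disj conj) (hA1 : Finite V)
    (rel : Set F → F → Prop) :
    (∃ μ : Set V → Set V,
        (∀ A ∈ defFam sat, μ A ⊆ A) ∧
        (∀ A ∈ defFam sat, ∀ B ∈ defFam sat, μ B ∩ A ⊆ μ A) ∧
        (∀ A ∈ defFam sat, A ∈ coFam sat neg → μ A ∈ coFam sat neg) ∧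
        (∀ A ∈ defFam sat, μ A ∈ defFam sat) ∧
        (∀ (Γ : Set F) (α : F), rel Γ α ↔
          (μ (modSet sat Γ) ⊆ modSet sat {α} ∧
            ¬ μ (modSet sat Γ) ⊆ modSet sat {neg α}))) ↔
      (cond0 sat rel ∧ cond6 sat neg rel ∧ cond7 sat neg disj rel ∧
        cond8 sat neg rel ∧ cond9 sat neg rel ∧ cond10 sat neg rel) := by
  constructor
  · rintro ⟨μ, h1, h2, h3, h4, h5⟩
    exact stmt10_forward neg disj conj sat hA3 hA1 rel μ h1 h2 h3 h4 h5
  · rintro ⟨hc0, hc6, hc7, hc8, hc9, hc10⟩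
    exact stmt10_backward neg disj conj sat hA3 hA1 rel hc0 hc6 hc7 hc8 hc9 hc10
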